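/- Let p ∈ (0,1) and K > 0. Let (b_j)_{j≥1} be a nonincreasing sequence of nonnegative real numbers with Σ_{j≥1} b_j^p ≤ K. Then there exists a constant C, depending only on p and K (and in particular independent of the sequence and of s), such that for every integer s ≥ 1 with Σ_{j≥s+1} b_j ≤ 1/2, one has Σ_{ℓ'=1}^{∞} Σ_ν ( (2ℓ')! / ∏_{j≥1} ν_j! ) ∏_{j≥1} b_j^{ν_j} ≤ C · s^{−2/p + 1}, where the inner sum is over all finitely supported multi-indices ν with |ν| = 2ℓ', ν_j = 0 for all j ≤ s, and ν_j even for all j ≥ s+1. -/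

import Mathlib

open Finset

private lemma factProdPos (μ : ℕ →₀ ℕ) :
    0 < μ.prod fun _ k => (Nat.factorial k : ℝ) :=
  Finset.prod_pos fun i _ => by positivity

private lemma bprodNonneg {b : ℕ → ℝ} (hb : ∀ n, 0 ≤ b n) (μ : ℕ →₀ ℕ) :
    0 ≤ μ.prod fun j k => b j ^ k :=
  Finset.prod_nonneg fun i _ => pow_nonneg (hb i) _

private lemma termNonneg {b : ℕ → ℝ} (hb : ∀ n, 0 ≤ b n) (m : ℕ) (μ : ℕ →₀ ℕ) :
    0 ≤ (Nat.factorial m : ℝ) / (μ.prod fun _ k => (Nat.factorial k : ℝ)) *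
      μ.prod fun j k => b j ^ k :=
  mul_nonneg (div_nonneg (by positivity) (factProdPos μ).le) (bprodNonneg hb μ)

/-- Finite multinomial estimate: a finite sum of multinomial terms over multi-indices with
sum `n`arbitrary supports inside `Q` is at most `T ^ n`, provided all finite sums of `b`
over `Q`-sets are at most `T`. -/
private lemma multiSumLe {b : ℕ → ℝ} (hb : ∀ n, 0 ≤ b n) {T : ℝ} (hT : 0 ≤ T)
    {Q : ℕ → Prop} (hFT : ∀ F : Finset ℕ, (∀ j ∈ F, Q j) → ∑ j ∈ F, b j ≤ T)
    (n : ℕ) (G : Finset (ℕ →₀ ℕ))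
    (hG : ∀ ρ ∈ G, ρ.sum (fun _ k => k) = n ∧ ∀ j, ρ j ≠ 0 → Q j) :
    ∑ ρ ∈ G, (Nat.factorial n : ℝ) / (ρ.prod fun _ k => (Nat.factorial k : ℝ)) *
        ρ.prod (fun j k => b j ^ k) ≤ T ^ n := by
  classical
  set F : Finset ℕ := G.sup Finsupp.support with hF
  have hsupp : ∀ ρ ∈ G, (ρ : ℕ →₀ ℕ).support ⊆ F := fun ρ hρ => Finset.le_sup hρ
  have hQF : ∀ j ∈ F, Q j := by
    intro j hj
    rcases Finset.mem_sup.1 hj with ⟨ρ, hρ, hjρ⟩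
    exact (hG ρ hρ).2 j (Finsupp.mem_support_iff.1 hjρ)
  have hsumF : ∀ ρ ∈ G, ∑ i ∈ F, ρ i = n := by
    intro ρ hρ
    have e : ρ.sum (fun _ k => k) = ∑ i ∈ F, ρ i :=
      Finset.sum_subset (hsupp ρ hρ) (fun x _ hx => Finsupp.notMem_support_iff.1 hx)
    rw [← e]; exact (hG ρ hρ).1
  have hmem : ∀ ρ ∈ G, ⇑ρ ∈ Finset.piAntidiag F n := by
    intro ρ hρ
    rw [Finset.mem_piAntidiag]
    exact ⟨hsumF ρ hρ, fun i hi => hsupp ρ hρ (Finsupp.mem_support_iff.2 hi)⟩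
  have hinj : ∀ x ∈ G, ∀ y ∈ G, ⇑x = ⇑y → x = y := fun x _ y _ h => DFunLike.coe_injective h
  calc ∑ ρ ∈ G, (Nat.factorial n : ℝ) / (ρ.prod fun _ k => (Nat.factorial k : ℝ)) *
        ρ.prod (fun j k => b j ^ k)
      = ∑ k ∈ G.image (fun ρ : ℕ →₀ ℕ => ⇑ρ),
          (Nat.multinomial F k : ℝ) * ∏ i ∈ F, b i ^ k i := by
        rw [Finset.sum_image hinj]
        refine Finset.sum_congr rfl fun ρ hρ => ?_
        have hprodfact : (ρ.prod fun _ k => (Nat.factorial k : ℝ)) =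
            ∏ i ∈ F, ((ρ i).factorial : ℝ) :=
          Finsupp.prod_of_support_subset ρ (hsupp ρ hρ) _ (fun i _ => by norm_num)
        have hprodb : (ρ.prod fun j k => b j ^ k) = ∏ i ∈ F, b i ^ ρ i :=
          Finsupp.prod_of_support_subset ρ (hsupp ρ hρ) _ (fun i _ => by norm_num)
        have hspecn := Nat.multinomial_spec F ⇑ρ
        rw [hsumF ρ hρ] at hspecn
        have hspec : (∏ i ∈ F, ((ρ i).factorial : ℝ)) * (Nat.multinomial F ⇑ρ : ℝ) =
            (n.factorial : ℝ) := by exact_mod_cast congrArg (Nat.cast (R := ℝ)) hspecn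
        have hmult : (Nat.multinomial F ⇑ρ : ℝ) =
            (n.factorial : ℝ) / ∏ i ∈ F, ((ρ i).factorial : ℝ) := by
          rw [eq_div_iff (by positivity), mul_comm]
          exact hspec
        rw [hprodfact, hprodb, hmult]
    _ ≤ ∑ k ∈ Finset.piAntidiag F n, (Nat.multinomial F k : ℝ) * ∏ i ∈ F, b i ^ k i := by
        apply Finset.sum_le_sum_of_subset_of_nonneg
        · intro k hk
          rcases Finset.mem_image.1 hk with ⟨ρ, hρ, rfl⟩
          exact hmem ρ hρ
        · intro k _ _
          exact mul_nonneg (Nat.cast_nonneg _)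
            (Finset.prod_nonneg fun i _ => pow_nonneg (hb i) _)
    _ = (∑ i ∈ F, b i) ^ n := (Finset.sum_pow_eq_sum_piAntidiag F b n).symm
    _ ≤ T ^ n := pow_le_pow_left₀ (Finset.sum_nonneg fun i _ => hb i) (hFT F hQF) n

/-- Extraction map: pull out twice the smallest element of the support. -/
noncomputable def phi (ν : ℕ →₀ ℕ) : ℕ × (ℕ →₀ ℕ) :=
  if h : ν.support.Nonempty then
    (ν.support.min' h, ν - Finsupp.single (ν.support.min' h) 2)
  else (0, 0)

private lemma phi_spec {s l : ℕ} {ν : ℕ →₀ ℕ} (h1 : ν.sum (fun _ n => n) = 2 * (l + 1))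
    (h2 : ∀ j < s, ν j = 0) (h3 : ∀ j, s ≤ j → Even (ν j)) :
    s ≤ (phi ν).1 ∧ (phi ν).2 + Finsupp.single (phi ν).1 2 = ν ∧
      (phi ν).2.sum (fun _ n => n) = 2 * l ∧ (∀ j, (phi ν).2 j ≠ 0 → s ≤ j) ∧
      ∀ j, (phi ν).2 j ≤ ν j := by
  have hne : ν.support.Nonempty := by
    rw [Finsupp.support_nonempty_iff]
    intro h0
    rw [h0, Finsupp.sum_zero_index] at h1
    omega
  rw [phi, dif_pos hne]
  dsimp only
  set j0 := ν.support.min' hne with hj0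
  have hj0mem : j0 ∈ ν.support := ν.support.min'_mem hne
  have hνj0 : ν j0 ≠ 0 := Finsupp.mem_support_iff.1 hj0mem
  have hsj0 : s ≤ j0 := by
    by_contra h
    exact hνj0 (h2 j0 (Nat.lt_of_not_le h))
  have h2le : 2 ≤ ν j0 := by
    rcases h3 j0 hsj0 with ⟨m, hm⟩
    omega
  have hle : Finsupp.single j0 2 ≤ ν := Finsupp.single_le_iff.2 h2le
  have hcancel : ν - Finsupp.single j0 2 + Finsupp.single j0 2 = ν := tsub_add_cancel_of_le hle
  have hptle : ∀ j, (ν - Finsupp.single j0 2 : ℕ →₀ ℕ) j ≤ ν j := by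
    intro j
    rw [Finsupp.tsub_apply ν (Finsupp.single j0 2) j]
    exact Nat.sub_le _ _
  refine ⟨hsj0, hcancel, ?_, ?_, hptle⟩
  · have e1 : ((ν - Finsupp.single j0 2) + Finsupp.single j0 2).sum (fun _ n => n) =
        (ν - Finsupp.single j0 2).sum (fun _ n => n) + 2 := by
      rw [Finsupp.sum_add_index' (fun _ => rfl) (fun _ _ _ => rfl),
        Finsupp.sum_single_index rfl]
    rw [hcancel, h1] at e1
    omega
  · intro j hj
    by_contra h
    have hj' : ν j = 0 := h2 j (Nat.lt_of_not_le h)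
    have := hptle j
    omega

/-- The comparison function on pairs. -/
noncomputable def gfun (b : ℕ → ℝ) (l : ℕ) (q : ℕ × (ℕ →₀ ℕ)) : ℝ :=
  b q.1 ^ 2 * (((2 * l).factorial : ℝ) / (q.2.prod fun _ n => (Nat.factorial n : ℝ)) *
    (q.2.prod fun j n => b j ^ n))

private lemma gfun_nonneg {b : ℕ → ℝ} (hb : ∀ n, 0 ≤ b n) (l : ℕ) (q : ℕ × (ℕ →₀ ℕ)) :
    0 ≤ gfun b l q :=
  mul_nonneg (pow_nonneg (hb _) _) (termNonneg hb _ _)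

private lemma term_le {b : ℕ → ℝ} (hb : ∀ n, 0 ≤ b n) {s l : ℕ} {ν : ℕ →₀ ℕ}
    (h1 : ν.sum (fun _ n => n) = 2 * (l + 1)) (h2 : ∀ j < s, ν j = 0)
    (h3 : ∀ j, s ≤ j → Even (ν j)) :
    (Nat.factorial (2 * (l + 1)) : ℝ) / (ν.prod fun _ n => (Nat.factorial n : ℝ)) *
        (ν.prod fun j n => b j ^ n)
      ≤ (2 * (l : ℝ) + 2) ^ 2 * gfun b l (phi ν) := by
  obtain ⟨hs1, hcancel, hsum, hvan, hle⟩ := phi_spec h1 h2 h3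
  set j0 := (phi ν).1 with hj0
  set ρ := (phi ν).2 with hρ
  have hPρ : 0 < ρ.prod fun _ n => (Nat.factorial n : ℝ) := factProdPos ρ
  have hPν : 0 < ν.prod fun _ n => (Nat.factorial n : ℝ) := factProdPos ν
  have hRρ : 0 ≤ ρ.prod fun j n => b j ^ n := bprodNonneg hb ρ
  have hbν : (ν.prod fun j n => b j ^ n) = (ρ.prod fun j n => b j ^ n) * b j0 ^ 2 := by
    conv_lhs => rw [← hcancel]
    rw [Finsupp.prod_add_index' (fun a => pow_zero (b a)) (fun a m n => pow_add (b a) m n),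
      Finsupp.prod_single_index (h := fun j n => b j ^ n) (pow_zero (b j0))]
  have hPle : (ρ.prod fun _ n => (Nat.factorial n : ℝ)) ≤
      ν.prod fun _ n => (Nat.factorial n : ℝ) := by
    have hsub : ρ.support ⊆ ν.support := by
      intro j hj
      rw [Finsupp.mem_support_iff] at hj ⊢
      intro h0
      exact hj (Nat.le_zero.1 (h0 ▸ hle j))
    rw [Finsupp.prod_of_support_subset ρ hsub (fun _ n => (Nat.factorial n : ℝ))
        (fun i _ => by norm_num),
      Finsupp.prod_of_support_subset ν (subset_refl _) (fun _ n => (Nat.factorial n : ℝ))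
        (fun i _ => by norm_num)]
    exact Finset.prod_le_prod (fun i _ => by positivity)
      (fun i _ => by exact_mod_cast Nat.factorial_le (hle i))
  have hfactn : (2 * (l + 1)).factorial = (2 * l + 2) * ((2 * l + 1) * (2 * l).factorial) := by
    have e : 2 * (l + 1) = (2 * l + 1) + 1 := by ring
    rw [e, Nat.factorial_succ, Nat.factorial_succ]
  have hA : (0 : ℝ) ≤ ((2 * l).factorial : ℝ) := by positivity
  calc (Nat.factorial (2 * (l + 1)) : ℝ) / (ν.prod fun _ n => (Nat.factorial n : ℝ)) *
        (ν.prod fun j n => b j ^ n)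
      = ((2 * (l : ℝ) + 2) * ((2 * (l : ℝ) + 1) * ((2 * l).factorial : ℝ))) /
          (ν.prod fun _ n => (Nat.factorial n : ℝ)) *
          ((ρ.prod fun j n => b j ^ n) * b j0 ^ 2) := by
        rw [hbν, hfactn]
        push_cast
        ring
    _ ≤ ((2 * (l : ℝ) + 2) * ((2 * (l : ℝ) + 2) * ((2 * l).factorial : ℝ))) /
          (ρ.prod fun _ n => (Nat.factorial n : ℝ)) *
          ((ρ.prod fun j n => b j ^ n) * b j0 ^ 2) := by
        apply mul_le_mul_of_nonneg_right _ (mul_nonneg hRρ (pow_nonneg (hb _) _))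
        apply div_le_div₀ (by positivity) _ hPρ hPle
        have hl0 : (0 : ℝ) ≤ (l : ℝ) := Nat.cast_nonneg l
        nlinarith [mul_nonneg (by linarith : (0:ℝ) ≤ 2 * (l:ℝ) + 2) hA]
    _ = (2 * (l : ℝ) + 2) ^ 2 * gfun b l (phi ν) := by
        simp only [gfun, ← hj0, ← hρ, div_eq_mul_inv]
        ring

private lemma inner_bound {b : ℕ → ℝ} (hb : ∀ n, 0 ≤ b n) {s : ℕ} {T B : ℝ}
    (hT0 : 0 ≤ T) (hB0 : 0 ≤ B) (hT : T ≤ 1 / 2)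
    (hFb : ∀ F : Finset ℕ, (∀ j ∈ F, s ≤ j) → ∑ j ∈ F, b j ≤ T)
    (hFb2 : ∀ F : Finset ℕ, (∀ j ∈ F, s ≤ j) → ∑ j ∈ F, b j ^ 2 ≤ B) (l : ℕ) :
    (∑' ν : {ν : ℕ →₀ ℕ // ν.sum (fun _ n => n) = 2 * (l + 1) ∧
          (∀ j < s, ν j = 0) ∧ ∀ j, s ≤ j → Even (ν j)},
        ((Nat.factorial (2 * (l + 1)) : ℝ) /
            ((ν : ℕ →₀ ℕ).prod fun _ n => (Nat.factorial n : ℝ))) *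
          ((ν : ℕ →₀ ℕ).prod fun j n => b j ^ n))
      ≤ (2 * (l : ℝ) + 2) ^ 2 * ((1 / 2 : ℝ) ^ (2 * l) * B) := by
  classical
  refine tsum_le_of_sum_le'
    (mul_nonneg (by positivity) (mul_nonneg (by positivity) hB0)) ?_
  intro u
  have hspec : ∀ x : {ν : ℕ →₀ ℕ // ν.sum (fun _ n => n) = 2 * (l + 1) ∧
      (∀ j < s, ν j = 0) ∧ ∀ j, s ≤ j → Even (ν j)},
      s ≤ (phi x.val).1 ∧
      (phi x.val).2 + Finsupp.single (phi x.val).1 2 = x.val ∧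
      (phi x.val).2.sum (fun _ n => n) = 2 * l ∧
      (∀ j, (phi x.val).2 j ≠ 0 → s ≤ j) ∧
      ∀ j, (phi x.val).2 j ≤ x.val j :=
    fun x => phi_spec x.2.1 x.2.2.1 x.2.2.2
  have hinj : ∀ x ∈ u, ∀ y ∈ u, phi x.val = phi y.val → x = y := by
    intro x hx y hy hxy
    have ex := (hspec x).2.1
    have ey := (hspec y).2.1
    apply Subtype.ext
    rw [← ex, ← ey, hxy]
  set F1 := (u.image fun x => phi x.val).image Prod.fst with hF1
  set F2 := (u.image fun x => phi x.val).image Prod.snd with hF2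
  have hF1s : ∀ j ∈ F1, s ≤ j := by
    intro j hj
    rcases Finset.mem_image.1 hj with ⟨q, hq, rfl⟩
    rcases Finset.mem_image.1 hq with ⟨x, hx, rfl⟩
    exact (hspec x).1
  have hF2s : ∀ ρ ∈ F2, ρ.sum (fun _ k => k) = 2 * l ∧ ∀ j, ρ j ≠ 0 → s ≤ j := by
    intro ρ hρ
    rcases Finset.mem_image.1 hρ with ⟨q, hq, rfl⟩
    rcases Finset.mem_image.1 hq with ⟨x, hx, rfl⟩
    exact ⟨(hspec x).2.2.1, (hspec x).2.2.2.1⟩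
  calc ∑ x ∈ u, ((Nat.factorial (2 * (l + 1)) : ℝ) /
            ((x : ℕ →₀ ℕ).prod fun _ n => (Nat.factorial n : ℝ))) *
          ((x : ℕ →₀ ℕ).prod fun j n => b j ^ n)
      ≤ ∑ x ∈ u, (2 * (l : ℝ) + 2) ^ 2 * gfun b l (phi x.val) :=
        Finset.sum_le_sum fun x _ => term_le hb x.2.1 x.2.2.1 x.2.2.2
    _ = (2 * (l : ℝ) + 2) ^ 2 * ∑ x ∈ u, gfun b l (phi x.val) := by
        rw [Finset.mul_sum]
    _ = (2 * (l : ℝ) + 2) ^ 2 *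
          ∑ q ∈ u.image (fun x => phi x.val), gfun b l q := by
        rw [Finset.sum_image hinj]
    _ ≤ (2 * (l : ℝ) + 2) ^ 2 * ∑ q ∈ F1 ×ˢ F2, gfun b l q := by
        apply mul_le_mul_of_nonneg_left _ (by positivity)
        apply Finset.sum_le_sum_of_subset_of_nonneg
        · intro q hq
          exact Finset.mem_product.2
            ⟨Finset.mem_image_of_mem _ hq, Finset.mem_image_of_mem _ hq⟩
        · intro q _ _
          exact gfun_nonneg hb l q
    _ = (2 * (l : ℝ) + 2) ^ 2 * ((∑ j ∈ F1, b j ^ 2) *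
          ∑ ρ ∈ F2, ((2 * l).factorial : ℝ) / (ρ.prod fun _ n => (Nat.factorial n : ℝ)) *
            (ρ.prod fun j n => b j ^ n)) := by
        rw [Finset.sum_mul_sum, Finset.sum_product]
        rfl
    _ ≤ (2 * (l : ℝ) + 2) ^ 2 * (B * (1 / 2 : ℝ) ^ (2 * l)) := by
        apply mul_le_mul_of_nonneg_left _ (by positivity)
        apply mul_le_mul (hFb2 F1 hF1s) _
          (Finset.sum_nonneg fun ρ _ => termNonneg hb _ _) hB0
        calc (∑ ρ ∈ F2, ((2 * l).factorial : ℝ) /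
                (ρ.prod fun _ n => (Nat.factorial n : ℝ)) * (ρ.prod fun j n => b j ^ n))
            ≤ T ^ (2 * l) := multiSumLe hb hT0 hFb (2 * l) F2 hF2s
          _ ≤ (1 / 2 : ℝ) ^ (2 * l) := pow_le_pow_left₀ hT0 hT _
    _ = (2 * (l : ℝ) + 2) ^ 2 * ((1 / 2 : ℝ) ^ (2 * l) * B) := by ring

/-- Dimension-truncation estimate: if `b` is nonincreasing, nonnegative, with
`∑_j b_j^p ≤ K` for some `p ∈ (0,1)`, then there is a constant `C = C(p,K)` such that
for every `s ≥ 1` with `∑_{j≥s+1} b_j ≤ 1/2`,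
`∑_{ℓ'≥1} ∑_{|ν|=2ℓ', ν_j=0 ∀ j≤s, ν_j even} ((2ℓ')!/∏ν_j!) ∏ b_j^{ν_j} ≤ C s^{−2/p+1}`.
Here `b n` stands for `b_{n+1}` of the paper, so `ν_j = 0` for `j ≤ s` becomes
`ν j = 0` for `j < s`, evenness is required for indices `j ≥ s`, and the sum over
`ℓ' ≥ 1` is written as a sum over `ℓ' = l + 1`, `l : ℕ`. -/
theorem stmt10 (p K : ℝ) (hp : 0 < p) (hp1 : p < 1) (hK : 0 < K) :
    ∃ C : ℝ, ∀ b : ℕ → ℝ, (∀ n, 0 ≤ b n) → Antitone b →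
      Summable (fun n => b n ^ p) → (∑' n : ℕ, b n ^ p) ≤ K →
      ∀ s : ℕ, 1 ≤ s → (∑' n : ℕ, b (n + s)) ≤ 1 / 2 →
        (∑' l : ℕ, ∑' ν : {ν : ℕ →₀ ℕ // ν.sum (fun _ n => n) = 2 * (l + 1) ∧
              (∀ j < s, ν j = 0) ∧ ∀ j, s ≤ j → Even (ν j)},
            ((Nat.factorial (2 * (l + 1)) : ℝ) /
                ((ν : ℕ →₀ ℕ).prod fun _ n => (Nat.factorial n : ℝ))) *
              ((ν : ℕ →₀ ℕ).prod fun j n => b j ^ n))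
          ≤ C * (s : ℝ) ^ (-2 / p + 1) := by
  classical
  have hgeom : ‖(1 / 4 : ℝ)‖ < 1 := by
    rw [Real.norm_eq_abs, abs_of_nonneg (by norm_num : (0:ℝ) ≤ 1 / 4)]
    norm_num
  have h1 := summable_pow_mul_geometric_of_norm_lt_one (R := ℝ) 2 hgeom
  have h2 := summable_pow_mul_geometric_of_norm_lt_one (R := ℝ) 1 hgeom
  have h0 := summable_pow_mul_geometric_of_norm_lt_one (R := ℝ) 0 hgeom
  have hDsum : Summable (fun l : ℕ => (2 * (l : ℝ) + 2) ^ 2 * (1 / 2 : ℝ) ^ (2 * l)) := by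
    have hs := ((h1.mul_left 4).add (h2.mul_left 8)).add (h0.mul_left 4)
    refine hs.congr fun l => ?_
    have e : ((1 : ℝ) / 2) ^ (2 * l) = ((1 : ℝ) / 4) ^ l := by
      rw [pow_mul]
      norm_num
    rw [e]
    ring
  set D := ∑' l : ℕ, (2 * (l : ℝ) + 2) ^ 2 * (1 / 2 : ℝ) ^ (2 * l) with hD
  have hD0 : 0 ≤ D := tsum_nonneg fun l => by positivity
  refine ⟨K ^ (2 / p) * D, ?_⟩
  intro b hb hmono hsump hsumK s hs htail
  have hsp : (0 : ℝ) < s := by exact_mod_cast hs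
  -- pointwise bound on b
  have hbK : ∀ n : ℕ, ((n : ℝ) + 1) * b n ^ p ≤ K := by
    intro n
    have h1' : ∀ i ∈ Finset.range (n + 1), b n ^ p ≤ b i ^ p := fun i hi =>
      Real.rpow_le_rpow (hb n) (hmono (Nat.lt_succ_iff.1 (Finset.mem_range.1 hi))) hp.le
    calc ((n : ℝ) + 1) * b n ^ p = ∑ _i ∈ Finset.range (n + 1), b n ^ p := by
          rw [Finset.sum_const, Finset.card_range, nsmul_eq_mul]
          push_cast
          ring
      _ ≤ ∑ i ∈ Finset.range (n + 1), b i ^ p := Finset.sum_le_sum h1'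
      _ ≤ ∑' i : ℕ, b i ^ p := Summable.sum_le_tsum _ (fun i _ => Real.rpow_nonneg (hb i) p) hsump
      _ ≤ K := hsumK
  have hbsp : b s ^ p ≤ K / s := by
    rw [le_div_iff₀ hsp]
    have h := hbK s
    nlinarith [Real.rpow_nonneg (hb s) p]
  -- tail summabilities
  have htsum_p : Summable fun n => b (n + s) ^ p := (summable_nat_add_iff s).2 hsump
  have hconst1 : ∀ n : ℕ, b (n + s) ≤ b s ^ ((1 : ℝ) - p) * b (n + s) ^ p := by
    intro n
    have hx := hb (n + s)
    have e0 : (1 : ℝ) - p + p = 1 := by ring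
    have e1 : b (n + s) ^ ((1 : ℝ) - p + p) =
        b (n + s) ^ ((1 : ℝ) - p) * b (n + s) ^ p :=
      Real.rpow_add' hx (by rw [e0]; norm_num)
    have e2 : b (n + s) = b (n + s) ^ ((1 : ℝ) - p) * b (n + s) ^ p := by
      rw [← e1, e0, Real.rpow_one]
    conv_lhs => rw [e2]
    have h3 : b (n + s) ^ ((1 : ℝ) - p) ≤ b s ^ ((1 : ℝ) - p) :=
      Real.rpow_le_rpow hx (hmono (Nat.le_add_left s n)) (by linarith)
    exact mul_le_mul_of_nonneg_right h3 (Real.rpow_nonneg hx p)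
  have hb1 : Summable fun n => b (n + s) :=
    Summable.of_nonneg_of_le (fun n => hb _) hconst1 (htsum_p.mul_left _)
  have hconst2 : ∀ n : ℕ, b (n + s) ^ 2 ≤ (K / s) ^ ((2 - p) / p) * b (n + s) ^ p := by
    intro n
    have hx := hb (n + s)
    have e0 : (2 : ℝ) - p + p = 2 := by ring
    have e1 : b (n + s) ^ ((2 : ℝ) - p + p) =
        b (n + s) ^ ((2 : ℝ) - p) * b (n + s) ^ p :=
      Real.rpow_add' hx (by rw [e0]; norm_num)
    have e2 : b (n + s) ^ 2 = b (n + s) ^ ((2 : ℝ) - p) * b (n + s) ^ p := by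
      rw [← e1, e0]
      rw [show (2 : ℝ) = ((2 : ℕ) : ℝ) by norm_num, Real.rpow_natCast]
    rw [e2]
    apply mul_le_mul_of_nonneg_right _ (Real.rpow_nonneg hx p)
    calc b (n + s) ^ ((2 : ℝ) - p)
        ≤ b s ^ ((2 : ℝ) - p) :=
          Real.rpow_le_rpow hx (hmono (Nat.le_add_left s n)) (by linarith)
      _ = (b s ^ p) ^ ((2 - p) / p) := by
          rw [← Real.rpow_mul (hb s)]
          congr 1
          field_simp
      _ ≤ (K / s) ^ ((2 - p) / p) :=
          Real.rpow_le_rpow (Real.rpow_nonneg (hb s) p) hbsp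
            (div_nonneg (by linarith) hp.le)
  have hb2 : Summable fun n => b (n + s) ^ 2 :=
    Summable.of_nonneg_of_le (fun n => by positivity) hconst2 (htsum_p.mul_left _)
  -- the two tail quantities
  have hT0 : (0 : ℝ) ≤ ∑' n : ℕ, b (n + s) := tsum_nonneg fun n => hb _
  have hB0 : (0 : ℝ) ≤ ∑' n : ℕ, b (n + s) ^ 2 := tsum_nonneg fun n => by positivity
  -- finite sums over sets of indices ≥ s
  have hFsum : ∀ (f : ℕ → ℝ), (∀ n, 0 ≤ f n) → Summable (fun n => f (n + s)) →
      ∀ F : Finset ℕ, (∀ j ∈ F, s ≤ j) → ∑ j ∈ F, f j ≤ ∑' n : ℕ, f (n + s) := by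
    intro f hf hfs F hF
    have hinj : ∀ x ∈ F, ∀ y ∈ F, x - s = y - s → x = y := by
      intro x hx y hy h
      have := hF x hx
      have := hF y hy
      omega
    calc ∑ j ∈ F, f j = ∑ j ∈ F, f ((j - s) + s) :=
          Finset.sum_congr rfl fun j hj => by rw [Nat.sub_add_cancel (hF j hj)]
      _ = ∑ n ∈ F.image (· - s), f (n + s) := by rw [Finset.sum_image hinj]
      _ ≤ ∑' n : ℕ, f (n + s) := Summable.sum_le_tsum _ (fun n _ => hf _) hfs
  have hFb : ∀ F : Finset ℕ, (∀ j ∈ F, s ≤ j) → ∑ j ∈ F, b j ≤ ∑' n : ℕ, b (n + s) :=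
    hFsum b hb hb1
  have hFb2 : ∀ F : Finset ℕ, (∀ j ∈ F, s ≤ j) →
      ∑ j ∈ F, b j ^ 2 ≤ ∑' n : ℕ, b (n + s) ^ 2 :=
    hFsum (fun n => b n ^ 2) (fun n => by positivity) hb2
  -- bound on B
  have hKs : (K / s) ^ ((2 - p) / p) * K = K ^ (2 / p) * (s : ℝ) ^ (-2 / p + 1) := by
    rw [Real.div_rpow hK.le hsp.le, div_mul_eq_mul_div,
      ← Real.rpow_add_one hK.ne' ((2 - p) / p)]
    have e1 : (2 - p) / p + 1 = 2 / p := by field_simp; ring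
    rw [e1, div_eq_mul_inv, ← Real.rpow_neg hsp.le]
    congr 1
    field_simp
    ring
  have hBle : (∑' n : ℕ, b (n + s) ^ 2) ≤ K ^ (2 / p) * (s : ℝ) ^ (-2 / p + 1) := by
    have hq0 : (0 : ℝ) ≤ (K / s) ^ ((2 - p) / p) :=
      Real.rpow_nonneg (by positivity) _
    have hc1 : (∑' n : ℕ, b (n + s) ^ 2) ≤
        (K / s) ^ ((2 - p) / p) * ∑' n : ℕ, b (n + s) ^ p := by
      rw [← tsum_mul_left]
      exact Summable.tsum_le_tsum hconst2 hb2 (htsum_p.mul_left _)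
    have hc2 : (∑' n : ℕ, b (n + s) ^ p) ≤ K :=
      le_trans (Summable.tsum_le_tsum_of_inj (· + s) (add_left_injective s)
        (fun c _ => Real.rpow_nonneg (hb c) p) (fun n => le_refl _) htsum_p hsump) hsumK
    calc (∑' n : ℕ, b (n + s) ^ 2)
        ≤ (K / s) ^ ((2 - p) / p) * ∑' n : ℕ, b (n + s) ^ p := hc1
      _ ≤ (K / s) ^ ((2 - p) / p) * K := mul_le_mul_of_nonneg_left hc2 hq0
      _ = K ^ (2 / p) * (s : ℝ) ^ (-2 / p + 1) := hKs
  -- assemble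
  refine tsum_le_of_sum_le'
    (mul_nonneg (mul_nonneg (Real.rpow_nonneg hK.le _) hD0)
      (Real.rpow_nonneg (Nat.cast_nonneg s) _)) ?_
  intro u
  calc ∑ l ∈ u, (∑' ν : {ν : ℕ →₀ ℕ // ν.sum (fun _ n => n) = 2 * (l + 1) ∧
            (∀ j < s, ν j = 0) ∧ ∀ j, s ≤ j → Even (ν j)},
          ((Nat.factorial (2 * (l + 1)) : ℝ) /
              ((ν : ℕ →₀ ℕ).prod fun _ n => (Nat.factorial n : ℝ))) *
            ((ν : ℕ →₀ ℕ).prod fun j n => b j ^ n))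
      ≤ ∑ l ∈ u, (2 * (l : ℝ) + 2) ^ 2 *
          ((1 / 2 : ℝ) ^ (2 * l) * ∑' n : ℕ, b (n + s) ^ 2) :=
        Finset.sum_le_sum fun l _ => inner_bound hb hT0 hB0 htail hFb hFb2 l
    _ = (∑ l ∈ u, (2 * (l : ℝ) + 2) ^ 2 * (1 / 2 : ℝ) ^ (2 * l)) *
          ∑' n : ℕ, b (n + s) ^ 2 := by
        rw [Finset.sum_mul]
        exact Finset.sum_congr rfl fun l _ => by ring
    _ ≤ D * ∑' n : ℕ, b (n + s) ^ 2 :=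
        mul_le_mul_of_nonneg_right
          (Summable.sum_le_tsum u (fun l _ => by positivity) hDsum) hB0
    _ ≤ D * (K ^ (2 / p) * (s : ℝ) ^ (-2 / p + 1)) :=
        mul_le_mul_of_nonneg_left hBle hD0
    _ = K ^ (2 / p) * D * (s : ℝ) ^ (-2 / p + 1) := by ring
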